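/- For the uniform kernel K(u) = (1/2)·1{|u| ≤ 1}, the asymptotic-relative-efficiency ratio 4 d(K)/b(K), where d(K) = ∫ [K(u) − (1/2)C(u)]² du with C(u) = ∫ K(u+v)K(v) dv and b(K) = ∫ C(u)² du, is strictly greater than 1. -/

import Mathlib

open MeasureTheory

private lemma poly_deriv (A B Cc x : ℝ) :
    HasDerivAt (fun u => A * u + B * u ^ 2 / 2 + Cc * u ^ 3 / 3)
      (A + B * x + Cc * x ^ 2) x := by
  have h1 : HasDerivAt (fun u : ℝ => u) 1 x := hasDerivAt_id x
  have h2 := hasDerivAt_pow 2 x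
  have h3 := hasDerivAt_pow 3 x
  have h := ((h1.const_mul A).add ((h2.const_mul B).div_const 2)).add
    ((h3.const_mul Cc).div_const 3)
  exact h.congr_deriv (by push_cast; ring)

private lemma piece (f : ℝ → ℝ) (a b A B Cc : ℝ) (hab : a ≤ b)
    (hfg : ∀ u ∈ Set.Ioo a b, f u = A + B * u + Cc * u ^ 2) :
    IntervalIntegrable f volume a b ∧
    ∫ u in a..b, f u =
      (A * b + B * b ^ 2 / 2 + Cc * b ^ 3 / 3) -
      (A * a + B * a ^ 2 / 2 + Cc * a ^ 3 / 3) := by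
  set g : ℝ → ℝ := fun u => A + B * u + Cc * u ^ 2 with hg
  have hgc : Continuous g := by fun_prop
  have hint_g : IntegrableOn g (Set.Ioo a b) :=
    (hgc.integrableOn_Icc).mono_set Set.Ioo_subset_Icc_self
  have hint_f : IntegrableOn f (Set.Ioo a b) :=
    hint_g.congr_fun (fun x hx => (hfg x hx).symm) measurableSet_Ioo
  have h1 : IntervalIntegrable f volume a b := by
    rw [intervalIntegrable_iff_integrableOn_Ioo_of_le hab]
    exact hint_f
  refine ⟨h1, ?_⟩
  have h2 : ∫ u in a..b, f u = ∫ u in a..b, g u := by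
    rw [intervalIntegral.integral_of_le hab, intervalIntegral.integral_of_le hab,
      integral_Ioc_eq_integral_Ioo, integral_Ioc_eq_integral_Ioo]
    exact setIntegral_congr_fun measurableSet_Ioo hfg
  rw [h2]
  exact intervalIntegral.integral_eq_sub_of_hasDerivAt
    (fun x _ => poly_deriv A B Cc x) (hgc.intervalIntegrable a b)

theorem stmt_14 (K : ℝ → ℝ)
    (hK : ∀ u, K u = if |u| ≤ 1 then (1 : ℝ) / 2 else 0)
    (C : ℝ → ℝ) (hC : ∀ v, C v = ∫ u, K (u + v) * K u)
    (d b : ℝ)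
    (hd : d = ∫ u, (K u - (1 / 2) * C u) ^ 2)
    (hb : b = ∫ u, C u ^ 2) :
    1 < 4 * d / b := by
  -- Step 1: closed form for C
  have hCmax : ∀ v, C v = max 0 (2 - |v|) / 4 := by
    intro v
    rw [hC]
    have hfun : (fun u => K (u + v) * K u) =
        Set.indicator (Set.Icc (max (-1) (-1 - v)) (min 1 (1 - v)))
          (fun _ => (1 / 4 : ℝ)) := by
      funext u
      have hmem : u ∈ Set.Icc (max (-1) (-1 - v)) (min 1 (1 - v)) ↔
          (|u + v| ≤ 1 ∧ |u| ≤ 1) := by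
        simp only [Set.mem_Icc, max_le_iff, le_min_iff, abs_le]
        constructor
        · rintro ⟨⟨h1, h2⟩, h3, h4⟩
          exact ⟨⟨by linarith, by linarith⟩, by linarith, by linarith⟩
        · rintro ⟨⟨h1, h2⟩, h3, h4⟩
          exact ⟨⟨by linarith, by linarith⟩, by linarith, by linarith⟩
      rw [Set.indicator_apply]
      by_cases h : |u + v| ≤ 1 ∧ |u| ≤ 1
      · rw [if_pos (hmem.mpr h)]
        simp [hK, h.1, h.2]
        norm_num
      · rw [if_neg (fun hm => h (hmem.mp hm))]
        rcases not_and_or.mp h with h' | h' <;> simp [hK, h']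
    rw [hfun, integral_indicator_const _ measurableSet_Icc, Real.volume_real_Icc]
    have key : min 1 (1 - v) - max (-1) (-1 - v) = 2 - |v| := by
      rcases le_total 0 v with h | h
      · rw [abs_of_nonneg h, min_eq_right (by linarith), max_eq_left (by linarith)]
        ring
      · rw [abs_of_nonpos h, min_eq_left (by linarith), max_eq_right (by linarith)]
        ring
    rw [key, max_comm]
    simp [smul_eq_mul]
    ring
  -- Step 2: compute b
  have hb' : b = 1 / 3 := by
    rw [hb]
    have hz : ∀ x, x ∉ Set.Ioc (-2 : ℝ) 2 → C x ^ 2 = 0 := by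
      intro x hx
      have h2 : 2 ≤ |x| := by
        simp only [Set.mem_Ioc, not_and_or, not_lt, not_le] at hx
        rcases hx with h | h
        · calc (2 : ℝ) ≤ -x := by linarith
            _ ≤ |x| := neg_le_abs x
        · exact h.le.trans (le_abs_self x)
      rw [hCmax, max_eq_left (by linarith)]
      norm_num
    rw [← setIntegral_eq_integral_of_forall_compl_eq_zero hz,
      ← intervalIntegral.integral_of_le (by norm_num : (-2 : ℝ) ≤ 2)]
    have p1 := piece (fun u => C u ^ 2) (-2) 0 (1/4) (1/4) (1/16) (by norm_num)
      (by
        intro u hu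
        obtain ⟨h1, h2⟩ := hu
        show C u ^ 2 = _
        rw [hCmax, abs_of_neg h2, max_eq_right (by linarith)]
        ring)
    have p2 := piece (fun u => C u ^ 2) 0 2 (1/4) (-(1/4)) (1/16) (by norm_num)
      (by
        intro u hu
        obtain ⟨h1, h2⟩ := hu
        show C u ^ 2 = _
        rw [hCmax, abs_of_pos h1, max_eq_right (by linarith)]
        ring)
    rw [← intervalIntegral.integral_add_adjacent_intervals p1.1 p2.1, p1.2, p2.2]
    norm_num
  -- Step 3: compute d
  have hd' : d = 5 / 24 := by
    rw [hd]
    set f : ℝ → ℝ := fun u => (K u - 1 / 2 * C u) ^ 2 with hf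
    have hz : ∀ x, x ∉ Set.Ioc (-2 : ℝ) 2 → f x = 0 := by
      intro x hx
      have h2 : 2 ≤ |x| := by
        simp only [Set.mem_Ioc, not_and_or, not_lt, not_le] at hx
        rcases hx with h | h
        · calc (2 : ℝ) ≤ -x := by linarith
            _ ≤ |x| := neg_le_abs x
        · exact h.le.trans (le_abs_self x)
      have hK0 : K x = 0 := by rw [hK, if_neg (by push_neg; linarith)]
      rw [hf]
      simp only
      rw [hK0, hCmax, max_eq_left (by linarith)]
      norm_num
    rw [← setIntegral_eq_integral_of_forall_compl_eq_zero hz,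
      ← intervalIntegral.integral_of_le (by norm_num : (-2 : ℝ) ≤ 2)]
    have p1 := piece f (-2) (-1) (1/16) (1/16) (1/64) (by norm_num)
      (by
        intro u hu
        obtain ⟨h1, h2⟩ := hu
        have hK0 : K u = 0 := by
          rw [hK, if_neg (by rw [abs_of_neg (by linarith)]; push_neg; linarith)]
        rw [hf]
        simp only
        rw [hK0, hCmax, abs_of_neg (by linarith), max_eq_right (by linarith)]
        ring)
    have p2 := piece f (-1) 0 (1/16) (-(1/16)) (1/64) (by norm_num)
      (by
        intro u hu
        obtain ⟨h1, h2⟩ := hu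
        have hK0 : K u = 1 / 2 := by
          rw [hK, if_pos (by rw [abs_of_neg h2]; linarith)]
        rw [hf]
        simp only
        rw [hK0, hCmax, abs_of_neg h2, max_eq_right (by linarith)]
        ring)
    have p3 := piece f 0 1 (1/16) (1/16) (1/64) (by norm_num)
      (by
        intro u hu
        obtain ⟨h1, h2⟩ := hu
        have hK0 : K u = 1 / 2 := by
          rw [hK, if_pos (by rw [abs_of_pos h1]; linarith)]
        rw [hf]
        simp only
        rw [hK0, hCmax, abs_of_pos h1, max_eq_right (by linarith)]
        ring)
    have p4 := piece f 1 2 (1/16) (-(1/16)) (1/64) (by norm_num)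
      (by
        intro u hu
        obtain ⟨h1, h2⟩ := hu
        have hK0 : K u = 0 := by
          rw [hK, if_neg (by rw [abs_of_pos (by linarith)]; push_neg; linarith)]
        rw [hf]
        simp only
        rw [hK0, hCmax, abs_of_pos (by linarith), max_eq_right (by linarith)]
        ring)
    rw [← intervalIntegral.integral_add_adjacent_intervals p1.1 (p2.1.trans (p3.1.trans p4.1)),
      ← intervalIntegral.integral_add_adjacent_intervals p2.1 (p3.1.trans p4.1),
      ← intervalIntegral.integral_add_adjacent_intervals p3.1 p4.1,
      p1.2, p2.2, p3.2, p4.2]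
    norm_num
  rw [hd', hb']
  norm_num
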